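/- arXiv:1509.01154 — 3 statements merged into one kernel-verified Lean document; each statement's English description precedes it below -/
import Mathlib

section
/- Let X be a γ-rough path with p = ⌊1/γ⌋ and let Y = (Y^(0),…,Y^(p−1)) be a path controlled by X, i.e. the remainders Y^(k)♯_{s,t} := Y^(k)_t − ∑_{n=k}^{p−1} Y^(n)_s X^(n−k)_{s,t} satisfy |Y^(k)♯_{s,t}| ≤ M|t−s|^{(p−k)γ}. Define Ξ_{s,t} := ∑_{n=1}^{p} Y^(n−1)_s X^(n)_{s,t}. Then for all s ≤ u ≤ t, δΞ_{s,u,t} = −∑_{k=1}^{p} Y^(k−1)♯_{s,u} X^(k)_{u,t}, and consequently |δΞ_{s,u,t}| ≤ C|t−s|^{(p+1)γ} for some constant C depending on M and the rough path norms. -/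
/-- For a controlled path `Y` and a `γ`-rough path `X` with `Ξ_{s,t} = ∑_{n=1}^p Y^(n-1)_s X^(n)_{s,t}`:
`δΞ_{s,u,t} = -∑_{k=1}^p Y^(k-1)♯_{s,u} X^(k)_{u,t}` and consequently
`|δΞ_{s,u,t}| ≤ C |t-s|^{(p+1)γ}`. -/
theorem stmt3 (T γ : ℝ) (hT : 0 < T) (hγ : γ ∈ Set.Ioo (0:ℝ) 1)
    (p : ℕ) (hp : p = ⌊1/γ⌋₊)
    (X : ℕ → ℝ → ℝ → ℝ) (CX : ℝ)
    (hX0 : ∀ s t, X 0 s t = 1)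
    (hChen : ∀ n, n ≤ p → ∀ s u t, 0 ≤ s → s ≤ u → u ≤ t → t ≤ T →
      X n s t = ∑ k ∈ Finset.range (n + 1), X (n - k) s u * X k u t)
    (hXb : ∀ n, 1 ≤ n → n ≤ p → ∀ s t, 0 ≤ s → s ≤ t → t ≤ T →
      |X n s t| ≤ CX * (t - s) ^ ((n : ℝ) * γ))
    (Y : ℕ → ℝ → ℝ) (M : ℝ) (Ys : ℕ → ℝ → ℝ → ℝ)
    (hYs : ∀ k s t, Ys k s t = Y k t - ∑ n ∈ Finset.Icc k (p - 1), Y n s * X (n - k) s t)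
    (hYb : ∀ k, k ≤ p - 1 → ∀ s t, 0 ≤ s → s ≤ t → t ≤ T →
      |Ys k s t| ≤ M * (t - s) ^ (((p : ℝ) - k) * γ))
    (Ξ : ℝ → ℝ → ℝ)
    (hΞ : ∀ s t, Ξ s t = ∑ n ∈ Finset.Icc 1 p, Y (n - 1) s * X n s t) :
    (∀ s u t, 0 ≤ s → s ≤ u → u ≤ t → t ≤ T →
      Ξ s t - Ξ s u - Ξ u t = -∑ k ∈ Finset.Icc 1 p, Ys (k - 1) s u * X k u t) ∧
    ∃ C : ℝ, ∀ s u t, 0 ≤ s → s ≤ u → u ≤ t → t ≤ T →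
      |Ξ s t - Ξ s u - Ξ u t| ≤ C * (t - s) ^ (((p : ℝ) + 1) * γ) := by
  obtain ⟨hγ0, hγ1⟩ := hγ
  have hp1 : 1 ≤ p := by
    rw [hp]
    have h1 : (1:ℝ) ≤ 1 / γ := by
      rw [le_div_iff₀ hγ0]; linarith
    exact_mod_cast Nat.le_floor (by exact_mod_cast h1)
  -- the algebraic identity
  have key : ∀ s u t, 0 ≤ s → s ≤ u → u ≤ t → t ≤ T →
      Ξ s t - Ξ s u - Ξ u t = -∑ k ∈ Finset.Icc 1 p, Ys (k - 1) s u * X k u t := by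
    intro s u t hs hsu hut htT
    have step1 : ∀ n ∈ Finset.Icc 1 p,
        Y (n-1) s * X n s t - Y (n-1) s * X n s u
        = ∑ k ∈ Finset.Icc 1 n, Y (n-1) s * (X (n-k) s u * X k u t) := by
      intro n hn
      rw [Finset.mem_Icc] at hn
      have hc := hChen n hn.2 s u t hs hsu hut htT
      rw [Finset.sum_range_succ'] at hc
      have hicc : ∑ k ∈ Finset.Icc 1 n, Y (n-1) s * (X (n-k) s u * X k u t)
          = ∑ i ∈ Finset.range n, Y (n-1) s * (X (n-(1+i)) s u * X (1+i) u t) := by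
        rw [← Finset.Ico_add_one_right_eq_Icc, Finset.sum_Ico_eq_sum_range]
        simp
      rw [hicc]
      rw [hc, hX0, Nat.sub_zero]
      have hcg : ∀ i ∈ Finset.range n,
          Y (n-1) s * (X (n - (i+1)) s u * X (i+1) u t)
          = Y (n-1) s * (X (n-(1+i)) s u * X (1+i) u t) := by
        intro i _
        rw [Nat.add_comm 1 i]
      rw [mul_add, Finset.mul_sum, Finset.sum_congr rfl hcg]
      ring
    have hswap : ∑ n ∈ Finset.Icc 1 p, ∑ k ∈ Finset.Icc 1 n,
          Y (n-1) s * (X (n-k) s u * X k u t)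
        = ∑ k ∈ Finset.Icc 1 p, ∑ n ∈ Finset.Icc k p,
          Y (n-1) s * (X (n-k) s u * X k u t) := by
      apply Finset.sum_comm'
      intro n k
      simp only [Finset.mem_Icc]
      omega
    have reindex : ∀ k ∈ Finset.Icc 1 p,
        ∑ n ∈ Finset.Icc k p, Y (n-1) s * X (n-k) s u
        = ∑ m ∈ Finset.Icc (k-1) (p-1), Y m s * X (m-(k-1)) s u := by
      intro k hk
      rw [Finset.mem_Icc] at hk
      have hmap : Finset.Icc k p = (Finset.Icc (k-1) (p-1)).map (addRightEmbedding 1) := by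
        rw [Finset.map_add_right_Icc]
        congr 1 <;> omega
      rw [hmap, Finset.sum_map]
      apply Finset.sum_congr rfl
      intro m hm
      rw [Finset.mem_Icc] at hm
      simp only [addRightEmbedding_apply]
      congr 2 <;> omega
    have hd : Ξ s t - Ξ s u - Ξ u t
        = ∑ k ∈ Finset.Icc 1 p,
            ((∑ n ∈ Finset.Icc k p, Y (n-1) s * X (n-k) s u) - Y (k-1) u) * X k u t := by
      rw [hΞ s t, hΞ s u, hΞ u t, ← Finset.sum_sub_distrib,
        Finset.sum_congr rfl step1, hswap, ← Finset.sum_sub_distrib]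
      apply Finset.sum_congr rfl
      intro k _
      rw [sub_mul, Finset.sum_mul]
      congr 1
      apply Finset.sum_congr rfl
      intro n _
      ring
    rw [hd, ← Finset.sum_neg_distrib]
    apply Finset.sum_congr rfl
    intro k hk
    rw [hYs, reindex k hk]
    ring
  refine ⟨key, ⟨p * (M * CX), ?_⟩⟩
  -- nonnegativity of the constants
  have hM : 0 ≤ M := by
    have h := hYb 0 (Nat.zero_le _) 0 T le_rfl hT.le le_rfl
    have h2 : (0:ℝ) < (T - 0) ^ (((p:ℝ) - (0:ℕ)) * γ) :=
      Real.rpow_pos_of_pos (by linarith) _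
    nlinarith [abs_nonneg (Ys 0 0 T)]
  have hCX : 0 ≤ CX := by
    have h := hXb 1 le_rfl hp1 0 T le_rfl hT.le le_rfl
    have h2 : (0:ℝ) < (T - 0) ^ (((1:ℕ):ℝ) * γ) :=
      Real.rpow_pos_of_pos (by linarith) _
    nlinarith [abs_nonneg (X 1 0 T)]
  intro s u t hs hsu hut htT
  rw [key s u t hs hsu hut htT, abs_neg]
  have hbd : ∀ k ∈ Finset.Icc 1 p,
      |Ys (k-1) s u * X k u t| ≤ M * CX * (t-s) ^ (((p:ℝ) + 1) * γ) := by
    intro k hk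
    rw [Finset.mem_Icc] at hk
    have hus : (0:ℝ) ≤ u - s := by linarith
    have hts : (0:ℝ) ≤ t - s := by linarith
    have htu : (0:ℝ) ≤ t - u := by linarith
    have hcast : ((k-1:ℕ):ℝ) = (k:ℝ) - 1 := by
      have := hk.1; push_cast [Nat.cast_sub this]; ring
    have hkp : ((k:ℝ)) ≤ (p:ℝ) := by exact_mod_cast hk.2
    have hk1 : (1:ℝ) ≤ (k:ℝ) := by exact_mod_cast hk.1
    have ha : (0:ℝ) ≤ ((p:ℝ) - ((k-1:ℕ):ℝ)) * γ := by
      rw [hcast]; apply mul_nonneg (by linarith) hγ0.le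
    have hb : (0:ℝ) ≤ ((k:ℝ)) * γ := by positivity
    have hY := hYb (k-1) (by omega) s u hs hsu (le_trans hut htT)
    have hXk := hXb k hk.1 hk.2 u t (le_trans hs hsu) hut htT
    rw [abs_mul]
    calc |Ys (k-1) s u| * |X k u t|
        ≤ (M * (u-s) ^ (((p:ℝ) - ((k-1:ℕ):ℝ)) * γ)) * (CX * (t-u) ^ ((k:ℝ) * γ)) := by
          apply mul_le_mul hY hXk (abs_nonneg _)
          exact mul_nonneg hM (Real.rpow_nonneg hus _)
      _ ≤ (M * (t-s) ^ (((p:ℝ) - ((k-1:ℕ):ℝ)) * γ)) * (CX * (t-s) ^ ((k:ℝ) * γ)) := by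
          apply mul_le_mul
          · exact mul_le_mul_of_nonneg_left
              (Real.rpow_le_rpow hus (by linarith) ha) hM
          · exact mul_le_mul_of_nonneg_left
              (Real.rpow_le_rpow htu (by linarith) hb) hCX
          · exact mul_nonneg hCX (Real.rpow_nonneg htu _)
          · exact mul_nonneg hM (Real.rpow_nonneg hts _)
      _ = M * CX * ((t-s) ^ (((p:ℝ) - ((k-1:ℕ):ℝ)) * γ) * (t-s) ^ ((k:ℝ) * γ)) := by ring
      _ = M * CX * (t-s) ^ (((p:ℝ) + 1) * γ) := by
          rw [← Real.rpow_add' hts]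
          · congr 2
            rw [hcast]; ring
          · rw [hcast]
            have : ((p:ℝ) - ((k:ℝ)-1)) * γ + (k:ℝ) * γ = ((p:ℝ)+1) * γ := by ring
            rw [this]
            positivity
  calc |∑ k ∈ Finset.Icc 1 p, Ys (k-1) s u * X k u t|
      ≤ ∑ k ∈ Finset.Icc 1 p, |Ys (k-1) s u * X k u t| :=
        Finset.abs_sum_le_sum_abs _ _
    _ ≤ ∑ _k ∈ Finset.Icc 1 p, M * CX * (t-s) ^ (((p:ℝ) + 1) * γ) :=
        Finset.sum_le_sum hbd
    _ = p * (M * CX) * (t-s) ^ (((p:ℝ) + 1) * γ) := by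
        rw [Finset.sum_const, Nat.card_Icc]
        simp only [nsmul_eq_mul]
        push_cast [Nat.cast_sub hp1]
        ring
end

section
/- Local Lipschitz estimate for the rough integrand map: let X, X̃ be γ-rough paths and Y, Ỹ controlled paths (by X, X̃ respectively), all with norms and initial values bounded by M. Set Ξ_{s,t} := ∑_{n=1}^p Y^(n−1)_s X^(n)_{s,t} and Ξ̃ analogously. Then ‖δ(Ξ − Ξ̃)‖_{(p+1)γ} ≤ M(ρ_γ(X, X̃) + ‖Y; Ỹ‖_{X,X̃}), where ρ_γ(X,X̃) := ∑_{n=1}^p sup_{s<t} |X^(n)_{s,t} − X̃^(n)_{s,t}|/|t−s|^{nγ} and ‖Y; Ỹ‖_{X,X̃} := ∑_{k=0}^{p−1} ‖Y^(k)♯ − Ỹ^(k)♯‖_{(p−k)γ}. -/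
private lemma sumIcc (p : ℕ) (f : ℕ → ℝ) :
    ∑ n ∈ Finset.Icc 1 p, f n = ∑ i ∈ Finset.range p, f (i + 1) := by
  rw [← Finset.Ico_add_one_right_eq_Icc, Finset.sum_Ico_eq_sum_range]
  simp [add_comm]

private lemma keyid (p : ℕ) (X : ℕ → ℝ → ℝ → ℝ)
    (Y : ℕ → ℝ → ℝ) (Ys : ℕ → ℝ → ℝ → ℝ) (s u t : ℝ)
    (hX0 : ∀ a b, X 0 a b = 1)
    (hChen : ∀ n, n ≤ p → X n s t = ∑ k ∈ Finset.range (n + 1), X (n - k) s u * X k u t)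
    (hYs : ∀ k, Ys k s u = Y k u - ∑ n ∈ Finset.Icc k (p - 1), Y n s * X (n - k) s u)
    (Ξ : ℝ → ℝ → ℝ)
    (hΞ : ∀ a b, Ξ a b = ∑ n ∈ Finset.Icc 1 p, Y (n - 1) a * X n a b) :
    Ξ s t - Ξ s u - Ξ u t = -∑ k ∈ Finset.range p, Ys k s u * X (k + 1) u t := by
  rw [hΞ, hΞ, hΞ, sumIcc, sumIcc, sumIcc]
  simp only [Nat.add_sub_cancel]
  have h1 : ∑ i ∈ Finset.range p, Y i s * X (i + 1) s t
      = ∑ i ∈ Finset.range p, (Y i s * X (i + 1) s u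
        + ∑ k ∈ Finset.range (i + 1), Y i s * (X (i - k) s u * X (k + 1) u t)) := by
    refine Finset.sum_congr rfl fun i hi => ?_
    rw [hChen (i + 1) (Finset.mem_range.1 hi), Finset.sum_range_succ']
    simp only [Nat.succ_sub_succ, Nat.sub_zero, hX0, mul_one, Finset.mul_sum, mul_add]
    ring
  rw [h1, Finset.sum_add_distrib]
  have hswap : ∑ i ∈ Finset.range p, ∑ k ∈ Finset.range (i + 1),
        Y i s * (X (i - k) s u * X (k + 1) u t)
      = ∑ k ∈ Finset.range p, ∑ i ∈ Finset.Icc k (p - 1),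
        Y i s * (X (i - k) s u * X (k + 1) u t) := by
    refine Finset.sum_comm' ?_
    intro x y
    simp only [Finset.mem_range, Finset.mem_Icc]
    omega
  rw [hswap]
  have h2 : ∀ k ∈ Finset.range p, ∑ i ∈ Finset.Icc k (p - 1),
        Y i s * (X (i - k) s u * X (k + 1) u t)
      = Y k u * X (k + 1) u t - Ys k s u * X (k + 1) u t := by
    intro k _
    have e1 : ∑ i ∈ Finset.Icc k (p - 1), Y i s * (X (i - k) s u * X (k + 1) u t)
        = (∑ i ∈ Finset.Icc k (p - 1), Y i s * X (i - k) s u) * X (k + 1) u t := by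
      rw [Finset.sum_mul]
      exact Finset.sum_congr rfl fun _ _ => by ring
    have h3 : ∑ n ∈ Finset.Icc k (p - 1), Y n s * X (n - k) s u = Y k u - Ys k s u := by
      have := hYs k; linarith
    rw [e1, h3]; ring
  rw [Finset.sum_congr rfl h2, Finset.sum_sub_distrib]
  ring

/-- Local Lipschitz estimate for the rough integrand map:
`‖δ(Ξ - Ξ̃)‖_{(p+1)γ} ≤ M (ρ_γ(X,X̃) + ‖Y;Ỹ‖_{X,X̃})` where
`Ξ_{s,t} = ∑_{n=1}^p Y^(n-1)_s X^(n)_{s,t}` and similarly for `Ξ̃`. -/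
theorem stmt18 (T γ : ℝ) (hT : 0 < T) (hγ : γ ∈ Set.Ioo (0:ℝ) (1/2))
    (p : ℕ) (hp : p = ⌊1/γ⌋₊)
    (M : ℝ) (hM : 0 ≤ M)
    (X Xt : ℕ → ℝ → ℝ → ℝ)
    (hX0 : ∀ s t, X 0 s t = 1) (hXt0 : ∀ s t, Xt 0 s t = 1)
    (hChen : ∀ n, n ≤ p → ∀ s u t, 0 ≤ s → s ≤ u → u ≤ t → t ≤ T →
      X n s t = ∑ k ∈ Finset.range (n + 1), X (n - k) s u * X k u t)
    (hChent : ∀ n, n ≤ p → ∀ s u t, 0 ≤ s → s ≤ u → u ≤ t → t ≤ T →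
      Xt n s t = ∑ k ∈ Finset.range (n + 1), Xt (n - k) s u * Xt k u t)
    (hXb : ∀ n, 1 ≤ n → n ≤ p → ∀ s t, 0 ≤ s → s ≤ t → t ≤ T →
      |X n s t| ≤ M * (t - s) ^ ((n : ℝ) * γ))
    (hXtb : ∀ n, 1 ≤ n → n ≤ p → ∀ s t, 0 ≤ s → s ≤ t → t ≤ T →
      |Xt n s t| ≤ M * (t - s) ^ ((n : ℝ) * γ))
    (Y Yt : ℕ → ℝ → ℝ) (Ys Yts : ℕ → ℝ → ℝ → ℝ)
    (hYs : ∀ k s t, Ys k s t = Y k t - ∑ n ∈ Finset.Icc k (p - 1), Y n s * X (n - k) s t)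
    (hYts : ∀ k s t, Yts k s t = Yt k t - ∑ n ∈ Finset.Icc k (p - 1), Yt n s * Xt (n - k) s t)
    (hYb : ∀ k, k ≤ p - 1 → ∀ s t, 0 ≤ s → s ≤ t → t ≤ T →
      |Ys k s t| ≤ M * (t - s) ^ (((p : ℝ) - k) * γ))
    (hYtb : ∀ k, k ≤ p - 1 → ∀ s t, 0 ≤ s → s ≤ t → t ≤ T →
      |Yts k s t| ≤ M * (t - s) ^ (((p : ℝ) - k) * γ))
    (ρn : ℕ → ℝ)
    (hρ : ∀ n, 1 ≤ n → n ≤ p → ∀ s t, 0 ≤ s → s ≤ t → t ≤ T →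
      |X n s t - Xt n s t| ≤ ρn n * (t - s) ^ ((n : ℝ) * γ))
    (dn : ℕ → ℝ)
    (hd : ∀ k, k ≤ p - 1 → ∀ s t, 0 ≤ s → s ≤ t → t ≤ T →
      |Ys k s t - Yts k s t| ≤ dn k * (t - s) ^ (((p : ℝ) - k) * γ))
    (Ξ Ξt : ℝ → ℝ → ℝ)
    (hΞ : ∀ s t, Ξ s t = ∑ n ∈ Finset.Icc 1 p, Y (n - 1) s * X n s t)
    (hΞt : ∀ s t, Ξt s t = ∑ n ∈ Finset.Icc 1 p, Yt (n - 1) s * Xt n s t) :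
    ∀ s u t, 0 ≤ s → s ≤ u → u ≤ t → t ≤ T →
      |(Ξ s t - Ξ s u - Ξ u t) - (Ξt s t - Ξt s u - Ξt u t)| ≤
        M * ((∑ n ∈ Finset.Icc 1 p, ρn n) + (∑ k ∈ Finset.range p, dn k)) *
          (t - s) ^ (((p : ℝ) + 1) * γ) := by
  obtain ⟨hγ0, hγ2⟩ := hγ
  intro s u t h0s hsu hut htT
  have h0u : (0:ℝ) ≤ u := le_trans h0s hsu
  have hst : s ≤ t := le_trans hsu hut
  have h0t : (0:ℝ) ≤ t := le_trans h0u hut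
  -- nonnegativity of the Lipschitz coefficients
  have hTpos : ∀ (e : ℝ), 0 < (T - 0) ^ e := fun e => Real.rpow_pos_of_pos (by linarith) e
  have hρ0 : ∀ n, 1 ≤ n → n ≤ p → 0 ≤ ρn n := by
    intro n h1 h2
    have := hρ n h1 h2 0 T le_rfl (le_of_lt hT) le_rfl
    nlinarith [abs_nonneg (X n 0 T - Xt n 0 T), hTpos ((n : ℝ) * γ)]
  have hd0 : ∀ k, k ≤ p - 1 → 0 ≤ dn k := by
    intro k hk
    have := hd k hk 0 T le_rfl (le_of_lt hT) le_rfl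
    nlinarith [abs_nonneg (Ys k 0 T - Yts k 0 T), hTpos (((p : ℝ) - k) * γ)]
  -- rewrite both δΞ's via the key identity
  have key1 := keyid p X Y Ys s u t hX0
    (fun n hn => hChen n hn s u t h0s hsu hut htT)
    (fun k => hYs k s u) Ξ hΞ
  have key2 := keyid p Xt Yt Yts s u t hXt0
    (fun n hn => hChent n hn s u t h0s hsu hut htT)
    (fun k => hYts k s u) Ξt hΞt
  rw [key1, key2]
  rw [show (-∑ k ∈ Finset.range p, Ys k s u * X (k + 1) u t) -
      (-∑ k ∈ Finset.range p, Yts k s u * Xt (k + 1) u t)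
      = ∑ k ∈ Finset.range p,
        (Yts k s u * Xt (k + 1) u t - Ys k s u * X (k + 1) u t) by
    rw [Finset.sum_sub_distrib]; ring]
  -- per-term bound
  have hterm : ∀ k ∈ Finset.range p,
      |Yts k s u * Xt (k + 1) u t - Ys k s u * X (k + 1) u t|
        ≤ (M * dn k + M * ρn (k + 1)) * (t - s) ^ (((p : ℝ) + 1) * γ) := by
    intro k hk
    have hkp : k < p := Finset.mem_range.1 hk
    have hkp1 : k ≤ p - 1 := by omega
    have hk1 : 1 ≤ k + 1 := by omega
    have hk1p : k + 1 ≤ p := by omega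
    set a : ℝ := ((p : ℝ) - k) * γ with ha
    set b : ℝ := ((k + 1 : ℕ) : ℝ) * γ with hb
    have hA : |Ys k s u - Yts k s u| ≤ dn k * (u - s) ^ a :=
      hd k hkp1 s u h0s hsu (le_trans hut htT)
    have hB : |X (k + 1) u t| ≤ M * (t - u) ^ b :=
      hXb (k + 1) hk1 hk1p u t h0u hut htT
    have hC : |Yts k s u| ≤ M * (u - s) ^ a :=
      hYtb k hkp1 s u h0s hsu (le_trans hut htT)
    have hD : |X (k + 1) u t - Xt (k + 1) u t| ≤ ρn (k + 1) * (t - u) ^ b :=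
      hρ (k + 1) hk1 hk1p u t h0u hut htT
    have ha0 : (0:ℝ) ≤ a := by
      have h1 : (k : ℝ) ≤ (p : ℝ) := by exact_mod_cast le_of_lt hkp
      have h2 : (0:ℝ) ≤ (p : ℝ) - k := by linarith
      rw [ha]; positivity
    have hbpos : (0:ℝ) < b := by
      have h1 : (0:ℝ) < ((k + 1 : ℕ) : ℝ) := by exact_mod_cast Nat.succ_pos k
      rw [hb]; exact mul_pos h1 hγ0
    have hb0 : (0:ℝ) ≤ b := le_of_lt hbpos
    have hus0 : (0:ℝ) ≤ u - s := by linarith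
    have htu0 : (0:ℝ) ≤ t - u := by linarith
    have hpowa : (u - s) ^ a ≤ (t - s) ^ a :=
      Real.rpow_le_rpow hus0 (by linarith) ha0
    have hpowb : (t - u) ^ b ≤ (t - s) ^ b :=
      Real.rpow_le_rpow htu0 (by linarith) hb0
    have hpa0 : (0:ℝ) ≤ (u - s) ^ a := Real.rpow_nonneg hus0 _
    have hpb0 : (0:ℝ) ≤ (t - u) ^ b := Real.rpow_nonneg htu0 _
    have hpa0' : (0:ℝ) ≤ (t - s) ^ a := Real.rpow_nonneg (by linarith) _
    have hpb0' : (0:ℝ) ≤ (t - s) ^ b := Real.rpow_nonneg (by linarith) _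
    have hdk0 : 0 ≤ dn k := hd0 k hkp1
    have hρk0 : 0 ≤ ρn (k + 1) := hρ0 (k + 1) hk1 hk1p
    have hsum : ((p : ℝ) + 1) * γ = a + b := by rw [ha, hb]; push_cast; ring
    have hab : (t - s) ^ a * (t - s) ^ b = (t - s) ^ (((p : ℝ) + 1) * γ) := by
      rw [hsum, Real.rpow_add' (by linarith : (0:ℝ) ≤ t - s)
        (by rw [← hsum]; exact ne_of_gt (mul_pos (by positivity) hγ0))]
    calc |Yts k s u * Xt (k + 1) u t - Ys k s u * X (k + 1) u t|
        = |(Ys k s u - Yts k s u) * X (k + 1) u t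
            + Yts k s u * (X (k + 1) u t - Xt (k + 1) u t)| := by
          rw [show Yts k s u * Xt (k + 1) u t - Ys k s u * X (k + 1) u t
            = -((Ys k s u - Yts k s u) * X (k + 1) u t
              + Yts k s u * (X (k + 1) u t - Xt (k + 1) u t)) from by ring, abs_neg]
      _ ≤ |(Ys k s u - Yts k s u) * X (k + 1) u t|
            + |Yts k s u * (X (k + 1) u t - Xt (k + 1) u t)| := abs_add_le _ _
      _ = |Ys k s u - Yts k s u| * |X (k + 1) u t|
            + |Yts k s u| * |X (k + 1) u t - Xt (k + 1) u t| := by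
            rw [abs_mul, abs_mul]
      _ ≤ (dn k * (u - s) ^ a) * (M * (t - u) ^ b)
            + (M * (u - s) ^ a) * (ρn (k + 1) * (t - u) ^ b) :=
            add_le_add
              (mul_le_mul hA hB (abs_nonneg _) (mul_nonneg hdk0 hpa0))
              (mul_le_mul hC hD (abs_nonneg _) (mul_nonneg hM hpa0))
      _ ≤ (dn k * (t - s) ^ a) * (M * (t - s) ^ b)
            + (M * (t - s) ^ a) * (ρn (k + 1) * (t - s) ^ b) :=
            add_le_add
              (mul_le_mul (mul_le_mul_of_nonneg_left hpowa hdk0)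
                (mul_le_mul_of_nonneg_left hpowb hM)
                (mul_nonneg hM hpb0) (mul_nonneg hdk0 hpa0'))
              (mul_le_mul (mul_le_mul_of_nonneg_left hpowa hM)
                (mul_le_mul_of_nonneg_left hpowb hρk0)
                (mul_nonneg hρk0 hpb0) (mul_nonneg hM hpa0'))
      _ = (M * dn k + M * ρn (k + 1)) * ((t - s) ^ a * (t - s) ^ b) := by ring
      _ = (M * dn k + M * ρn (k + 1)) * (t - s) ^ (((p : ℝ) + 1) * γ) := by rw [hab]
  calc |∑ k ∈ Finset.range p,
        (Yts k s u * Xt (k + 1) u t - Ys k s u * X (k + 1) u t)|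
      ≤ ∑ k ∈ Finset.range p,
        |Yts k s u * Xt (k + 1) u t - Ys k s u * X (k + 1) u t| :=
        Finset.abs_sum_le_sum_abs _ _
    _ ≤ ∑ k ∈ Finset.range p,
        (M * dn k + M * ρn (k + 1)) * (t - s) ^ (((p : ℝ) + 1) * γ) :=
        Finset.sum_le_sum hterm
    _ = M * ((∑ n ∈ Finset.Icc 1 p, ρn n) + (∑ k ∈ Finset.range p, dn k)) *
          (t - s) ^ (((p : ℝ) + 1) * γ) := by
        rw [sumIcc p ρn, ← Finset.sum_mul, Finset.sum_add_distrib,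
          ← Finset.mul_sum, ← Finset.mul_sum]
        ring
end

section
/- Method of characteristics for the smooth transport equation: let b ∈ L^∞([0,T]; C¹_b(ℝ)), X : [0,T] → ℝ be C¹, u_0 ∈ C¹_b(ℝ), and let φ_t(·) be the C¹ flow of φ_t(x) = x + ∫_0^t b(r,φ_r(x)) dr + X_t, which is a bijection of ℝ for each t with C¹ inverse. Then u(t,x) := u_0(φ_t^{−1}(x)) satisfies the transport equation ∂_t u(t,x) + b(t,x) ∂_x u(t,x) + ∂_x u(t,x) Ẋ_t = 0 with u(0,x) = u_0(x), for all (t,x) ∈ (0,T] × ℝ. -/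
open MeasureTheory Set Filter Metric
open scoped Topology Interval

/-- Method of characteristics for the smooth transport equation: `u(t,x) := u₀(φ_t⁻¹(x))`
solves `∂_t u + b ∂_x u + ∂_x u Ẋ = 0`, `u(0,·) = u₀`, where `φ` is the flow of
`φ_t(x) = x + ∫_0^t b(r,φ_r(x)) dr + X_t`. -/
theorem stmt19 (T : ℝ) (hT : 0 < T)
    (b bx : ℝ → ℝ → ℝ) (Cb Cbx : ℝ)
    (hbcont : Continuous (Function.uncurry b))
    (hbxcont : Continuous (Function.uncurry bx))
    (hbderiv : ∀ r y, HasDerivAt (fun z => b r z) (bx r y) y)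
    (hbbdd : ∀ r y, |b r y| ≤ Cb) (hbxbdd : ∀ r y, |bx r y| ≤ Cbx)
    (X : ℝ → ℝ) (hX : ContDiff ℝ 1 X) (hX0 : X 0 = 0)
    (u0 : ℝ → ℝ) (hu0 : ContDiff ℝ 1 u0) (Cu : ℝ)
    (hu0b : ∀ z, |u0 z| ≤ Cu ∧ |deriv u0 z| ≤ Cu)
    (φ ψ : ℝ → ℝ → ℝ)
    (hφcont : Continuous (Function.uncurry φ))
    (hflow : ∀ t x, φ t x = x + (∫ r in (0:ℝ)..t, b r (φ r x)) + X t)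
    (hφC1 : ∀ t, ContDiff ℝ 1 (φ t))
    (hψC1 : ∀ t, ContDiff ℝ 1 (ψ t))
    (hinv1 : ∀ t, Function.LeftInverse (ψ t) (φ t))
    (hinv2 : ∀ t, Function.RightInverse (ψ t) (φ t)) :
    (∀ x, u0 (ψ 0 x) = u0 x) ∧
    ∀ t ∈ Set.Ioc (0:ℝ) T, ∀ x : ℝ,
      ∃ ut ux : ℝ,
        HasDerivAt (fun τ => u0 (ψ τ x)) ut t ∧
        HasDerivAt (fun y => u0 (ψ t y)) ux x ∧
        ut + b t x * ux + ux * deriv X t = 0 := by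
  have hCbx0 : 0 ≤ Cbx := (abs_nonneg _).trans (hbxbdd 0 0)
  have hφ0 : ∀ y, φ 0 y = y := by
    intro y; rw [hflow, intervalIntegral.integral_same, hX0]; ring
  have hψ0 : ∀ y, ψ 0 y = y := fun y => by
    conv_lhs => rw [← hφ0 y]
    exact hinv1 0 y
  refine ⟨fun x => by rw [hψ0], ?_⟩
  -- continuity helpers
  have hφt : ∀ y, Continuous fun τ => φ τ y := fun y =>
    hφcont.comp (continuous_id.prodMk continuous_const)
  have hbφ : ∀ y, Continuous fun r => b r (φ r y) := fun y =>
    hbcont.comp (continuous_id.prodMk (hφt y))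
  have hXd : ∀ s, HasDerivAt X (deriv X s) s := fun s =>
    ((hX.differentiable one_ne_zero) s).hasDerivAt
  -- time derivative of the flow
  have hflow' : ∀ y s, HasDerivAt (fun τ => φ τ y) (b s (φ s y) + deriv X s) s := by
    intro y s
    have h1 : HasDerivAt (fun τ => ∫ r in (0:ℝ)..τ, b r (φ r y)) (b s (φ s y)) s :=
      intervalIntegral.integral_hasDerivAt_right ((hbφ y).intervalIntegrable 0 s)
        (hbφ y).stronglyMeasurable.stronglyMeasurableAtFilter
        (hbφ y).continuousAt
    have h2 : HasDerivAt (fun τ => y + ((∫ r in (0:ℝ)..τ, b r (φ r y)) + X τ)) (b s (φ s y) + deriv X s) s := (h1.add (hXd s)).const_add y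
    have h3 : (fun τ => y + ((∫ r in (0:ℝ)..τ, b r (φ r y)) + X τ)) = fun τ => φ τ y := by
      funext τ; rw [hflow]; ring
    rw [h3] at h2
    exact h2
  -- spatial derivative of the flow
  set J : ℝ → ℝ → ℝ := fun s y => deriv (φ s) y with hJdef
  have hJd : ∀ s y, HasDerivAt (φ s) (J s y) y := fun s y =>
    (((hφC1 s).differentiable one_ne_zero) y).hasDerivAt
  -- Lipschitz estimate in the initial condition
  have hLip : ∀ (a c : ℝ) {s : ℝ}, 0 ≤ s → |φ s a - φ s c| ≤ |a - c| * Real.exp (Cbx * s) := by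
    intro a c s hs
    have hv : ∀ τ, HasDerivAt (fun σ => φ σ a - φ σ c) (b τ (φ τ a) - b τ (φ τ c)) τ := by
      intro τ
      have := (hflow' a τ).sub (hflow' c τ)
      rw [add_sub_add_right_eq_sub] at this
      exact this
    have hb_lip : ∀ (p q : ℝ) (r : ℝ), |b r p - b r q| ≤ Cbx * |p - q| := by
      intro p q r
      have := Convex.norm_image_sub_le_of_norm_hasDerivWithin_le
        (f := fun w => b r w) (f' := fun w => bx r w) (s := Set.univ)
        (fun w _ => (hbderiv r w).hasDerivWithinAt)
        (fun w _ => by simpa [Real.norm_eq_abs] using hbxbdd r w) convex_univ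
        (mem_univ q) (mem_univ p)
      simpa [Real.norm_eq_abs] using this
    have hG := norm_le_gronwallBound_of_norm_deriv_right_le
      (f := fun σ => φ σ a - φ σ c) (f' := fun σ => b σ (φ σ a) - b σ (φ σ c))
      (δ := |a - c|) (K := Cbx) (ε := 0) (a := 0) (b := s)
      (((hφt a).sub (hφt c)).continuousOn)
      (fun τ _ => (hv τ).hasDerivWithinAt)
      (by simp [hφ0, Real.norm_eq_abs])
      (fun τ _ => by
        simpa [Real.norm_eq_abs] using hb_lip (φ τ a) (φ τ c) τ)
    have h2 := hG s ⟨hs, le_refl s⟩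
    simpa [gronwallBound_ε0, Real.norm_eq_abs] using h2
  -- bound on J
  have hJbound : ∀ {s : ℝ}, 0 ≤ s → ∀ y, |J s y| ≤ Real.exp (Cbx * s) := by
    intro s hs y
    have ht : Tendsto (fun w => |slope (φ s) y w|) (𝓝[≠] y) (𝓝 |J s y|) :=
      (hasDerivAt_iff_tendsto_slope.1 (hJd s y)).abs
    refine le_of_tendsto ht ?_
    filter_upwards [self_mem_nhdsWithin] with w hw
    have hwy : w ≠ y := hw
    have h1 : |φ s w - φ s y| ≤ |w - y| * Real.exp (Cbx * s) := hLip w y hs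
    rw [slope_def_field, div_eq_mul_inv, abs_mul, abs_inv]
    rw [mul_inv_le_iff₀' (abs_pos.2 (sub_ne_zero.2 hwy))]
    exact h1
  -- measurability of the Jacobian (truncated in time)
  have hJmeas : ∀ y : ℝ, AEStronglyMeasurable (fun r => J (max r 0) y) volume := by
    intro y
    have hcn : ∀ n : ℕ, Continuous fun r => slope (φ (max r 0)) y (y + ((n : ℝ) + 1)⁻¹) := by
      intro n
      have h1 : Continuous fun r => φ (max r 0) (y + ((n : ℝ) + 1)⁻¹) :=
        (hφt (y + ((n : ℝ) + 1)⁻¹)).comp (continuous_id.max continuous_const)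
      have h2 : Continuous fun r => φ (max r 0) y :=
        (hφt y).comp (continuous_id.max continuous_const)
      simp only [slope_def_field]
      exact (h1.sub h2).div_const _
    refine aestronglyMeasurable_of_tendsto_ae atTop
      (fun n => (hcn n).aestronglyMeasurable) (ae_of_all _ ?_)
    intro r
    have hsl : Tendsto (slope (φ (max r 0)) y) (𝓝[≠] y) (𝓝 (J (max r 0) y)) :=
      hasDerivAt_iff_tendsto_slope.1 (hJd (max r 0) y)
    refine hsl.comp ?_
    rw [tendsto_nhdsWithin_iff]
    constructor
    · have : Tendsto (fun n : ℕ => ((n : ℝ) + 1)⁻¹) atTop (𝓝 0) := by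
        simpa [one_div] using (tendsto_one_div_add_atTop_nhds_zero_nat :
          Tendsto (fun n : ℕ => 1 / ((n : ℝ) + 1)) atTop (𝓝 0))
      simpa using (tendsto_const_nhds (x := y)).add this
    · refine Eventually.of_forall fun n => ?_
      have : (0:ℝ) < ((n : ℝ) + 1)⁻¹ := by positivity
      simp only [mem_compl_iff, mem_singleton_iff]
      intro h
      nlinarith [this, add_left_cancel (a := y) (b := ((n:ℝ)+1)⁻¹) (c := 0)]
  -- the integral equation for J
  have hJint : ∀ (y : ℝ) {s : ℝ}, 0 ≤ s →
      J s y = 1 + ∫ r in (0:ℝ)..s, bx r (φ r y) * J r y := by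
    intro y s hs
    have hmemI : ∀ {r : ℝ}, r ∈ Ι (0:ℝ) s → 0 < r ∧ r ≤ s := by
      intro r hr
      rw [Set.uIoc_of_le hs] at hr
      exact ⟨hr.1, hr.2⟩
    have hF'meas : AEStronglyMeasurable (fun r => bx r (φ r y) * J r y)
        (volume.restrict (Ι (0:ℝ) s)) := by
      have h1 : AEStronglyMeasurable (fun r => bx r (φ r y) * J (max r 0) y)
          (volume.restrict (Ι (0:ℝ) s)) :=
        ((hbxcont.comp (continuous_id.prodMk (hφt y))).aestronglyMeasurable.mul
          (hJmeas y)).restrict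
      refine h1.congr ((ae_restrict_iff' measurableSet_uIoc).2 (ae_of_all _ fun r hr => ?_))
      simp only [max_eq_left (hmemI hr).1.le]
    have key := (intervalIntegral.hasDerivAt_integral_of_dominated_loc_of_deriv_le
      (F := fun w r => b r (φ r w)) (F' := fun w r => bx r (φ r w) * J r w)
      (x₀ := y) (s := ball y 1) (a := 0) (b := s) (μ := volume)
      (bound := fun _ => Cbx * Real.exp (Cbx * s))
      (ball_mem_nhds y one_pos)
      (Eventually.of_forall fun w => ((hbφ w).aestronglyMeasurable).restrict)
      ((hbφ y).intervalIntegrable 0 s)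
      hF'meas
      (ae_of_all _ fun r hr w _ => by
        have hr' := hmemI hr
        rw [Real.norm_eq_abs, abs_mul]
        have h1 : |bx r (φ r w)| ≤ Cbx := hbxbdd r _
        have h2 : |J r w| ≤ Real.exp (Cbx * r) := hJbound hr'.1.le w
        have h3 : Real.exp (Cbx * r) ≤ Real.exp (Cbx * s) :=
          Real.exp_le_exp.2 (by nlinarith [hr'.1.le, hr'.2])
        exact mul_le_mul h1 (h2.trans h3) (abs_nonneg _) hCbx0)
      (continuous_const.intervalIntegrable 0 s)
      (ae_of_all _ fun r hr w _ => (hbderiv r (φ r w)).comp w (hJd r w))).2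
    have hsum : HasDerivAt (fun w => w + ((∫ r in (0:ℝ)..s, b r (φ r w)) + X s))
        (1 + ((∫ r in (0:ℝ)..s, bx r (φ r y) * J r y) + 0)) y :=
      (hasDerivAt_id y).add (key.add (hasDerivAt_const y (X s)))
    have h3 : (fun w => w + ((∫ r in (0:ℝ)..s, b r (φ r w)) + X s)) = φ s := by
      funext w; rw [hflow]; ring
    rw [h3] at hsum
    have := (hJd s y).unique hsum
    simpa using this
  -- exponential formula for J
  have hJeq : ∀ (y : ℝ) {s : ℝ}, 0 ≤ s →
      J s y = Real.exp (∫ r in (0:ℝ)..s, bx r (φ r y)) := by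
    intro y s hs
    set m : ℝ → ℝ := fun r => bx r (φ r y) with hm
    have hmc : Continuous m := hbxcont.comp (continuous_id.prodMk (hφt y))
    have hmb : ∀ r, |m r| ≤ Cbx := fun r => hbxbdd r _
    set i : ℝ → ℝ := fun r => m r * J (max r 0) y with hi
    have himeas : AEStronglyMeasurable i volume :=
      hmc.aestronglyMeasurable.mul (hJmeas y)
    have hii : ∀ a c : ℝ, IntervalIntegrable i volume a c := by
      intro a c
      rw [intervalIntegrable_iff]
      refine Integrable.mono'
        (g := fun _ => Cbx * Real.exp (Cbx * max |a| |c|))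
        (integrableOn_const measure_Ioc_lt_top.ne) himeas.restrict ?_
      rw [ae_restrict_iff' measurableSet_uIoc]
      refine ae_of_all _ fun r hr => ?_
      have hr1 : r ≤ max |a| |c| := by
        have h1 : r ≤ max a c := hr.2
        have := le_abs_self a; have := le_abs_self c
        rcases max_cases a c with ⟨h, _⟩ | ⟨h, _⟩ <;> rw [h] at h1 <;>
          [exact h1.trans ((le_abs_self a).trans (le_max_left _ _));
           exact h1.trans ((le_abs_self c).trans (le_max_right _ _))]
      have hmax : max r 0 ≤ max |a| |c| :=
        max_le hr1 (le_max_of_le_left (abs_nonneg a))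
      rw [Real.norm_eq_abs, hi, abs_mul]
      exact mul_le_mul (hmb r)
        ((hJbound (le_max_right r 0) y).trans
          (Real.exp_le_exp.2 (mul_le_mul_of_nonneg_left hmax hCbx0)))
        (abs_nonneg _) hCbx0
    set P : ℝ → ℝ := fun τ => ∫ r in (0:ℝ)..τ, i r with hP
    have hPcont : Continuous P := intervalIntegral.continuous_primitive hii 0
    set H : ℝ → ℝ := fun τ => 1 + P τ with hH
    have hHc : Continuous H := continuous_const.add hPcont
    have hHJ : ∀ {τ : ℝ}, 0 ≤ τ → H τ = J τ y := by
      intro τ hτ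
      have he : P τ = ∫ r in (0:ℝ)..τ, m r * J r y := by
        refine intervalIntegral.integral_congr fun r hr => ?_
        rw [Set.uIcc_of_le hτ] at hr
        simp only [hi, max_eq_left hr.1]
      show 1 + P τ = J τ y
      rw [he, ← hJint y hτ]
    have hPQ : ∀ {τ : ℝ}, 0 ≤ τ → P τ = ∫ r in (0:ℝ)..τ, m r * H r := by
      intro τ hτ
      refine intervalIntegral.integral_congr fun r hr => ?_
      rw [Set.uIcc_of_le hτ] at hr
      simp only [hi, max_eq_left hr.1, hHJ hr.1]
    have hQd : ∀ τ, HasDerivAt (fun σ => ∫ r in (0:ℝ)..σ, m r * H r) (m τ * H τ) τ := by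
      intro τ
      exact intervalIntegral.integral_hasDerivAt_right
        ((hmc.mul hHc).intervalIntegrable 0 τ)
        (hmc.mul hHc).stronglyMeasurable.stronglyMeasurableAtFilter
        (hmc.mul hHc).continuousAt
    set E : ℝ → ℝ := fun τ => Real.exp (∫ r in (0:ℝ)..τ, m r) with hE
    have hEc : Continuous E :=
      Real.continuous_exp.comp (intervalIntegral.continuous_primitive
        (fun a c => hmc.intervalIntegrable a c) 0)
    have hEd : ∀ τ, HasDerivAt E (m τ * E τ) τ := by
      intro τ
      have h1 : HasDerivAt (fun σ => ∫ r in (0:ℝ)..σ, m r) (m τ) τ :=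
        intervalIntegral.integral_hasDerivAt_right (hmc.intervalIntegrable 0 τ)
          hmc.stronglyMeasurable.stronglyMeasurableAtFilter hmc.continuousAt
      simpa [hE, mul_comm] using h1.exp
    have hdiffW : ∀ τ ∈ Ico (0:ℝ) s,
        HasDerivWithinAt (fun σ => H σ - E σ) (m τ * (H τ - E τ)) (Ici τ) τ := by
      intro τ hτ
      have hHd : HasDerivWithinAt H (m τ * H τ) (Ici τ) τ := by
        have h2 := (((hQd τ).const_add 1).hasDerivWithinAt (s := Ici τ))
        refine h2.congr ?_ ?_
        · intro σ hσ
          show H σ = 1 + ∫ r in (0:ℝ)..σ, m r * H r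
          rw [show H σ = 1 + P σ from rfl, hPQ (hτ.1.trans hσ)]
        · show H τ = 1 + ∫ r in (0:ℝ)..τ, m r * H r
          rw [show H τ = 1 + P τ from rfl, hPQ hτ.1]
      have h5 := hHd.sub (hEd τ).hasDerivWithinAt
      rw [← mul_sub] at h5
      exact h5
    have hG := norm_le_gronwallBound_of_norm_deriv_right_le
      (f := fun σ => H σ - E σ) (f' := fun σ => m σ * (H σ - E σ))
      (δ := 0) (K := Cbx) (ε := 0) (a := 0) (b := s)
      ((hHc.sub hEc).continuousOn) hdiffW
      (by simp [hH, hP, hE, intervalIntegral.integral_same])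
      (fun τ _ => by
        rw [Real.norm_eq_abs, Real.norm_eq_abs, abs_mul, add_zero]
        exact mul_le_mul_of_nonneg_right (hmb τ) (abs_nonneg _))
    have h2 := hG s ⟨hs, le_refl s⟩
    rw [gronwallBound_ε0_δ0, Real.norm_eq_abs] at h2
    have h3 : H s = E s := by
      have := abs_nonneg (H s - E s)
      have h4 : |H s - E s| = 0 := le_antisymm h2 this
      have := abs_eq_zero.1 h4
      linarith
    rw [← hHJ hs, h3]
  -- strict monotonicity of the flow maps
  have hmono : ∀ {s : ℝ}, 0 ≤ s → StrictMono (φ s) := by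
    intro s hs
    refine strictMono_of_deriv_pos fun y => ?_
    rw [show deriv (φ s) y = J s y from rfl, hJeq y hs]
    exact Real.exp_pos _
  -- joint continuity of ψ at positive times
  have hψcont : ∀ t' x' : ℝ, 0 < t' →
      Tendsto (fun p : ℝ × ℝ => ψ p.1 p.2) (𝓝 (t', x')) (𝓝 (ψ t' x')) := by
    intro t' x' ht'
    rw [tendsto_order]
    constructor
    · intro c hc
      have h1 : φ t' c < x' := by
        have := hmono ht'.le hc
        rwa [hinv2 t' x'] at this
      have hop : IsOpen {p : ℝ × ℝ | φ p.1 c < p.2 ∧ 0 < p.1} := by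
        refine IsOpen.inter ?_ (isOpen_lt continuous_const continuous_fst)
        exact isOpen_lt (hφcont.comp ((continuous_fst.prodMk continuous_const))) continuous_snd
      have hmem : (t', x') ∈ {p : ℝ × ℝ | φ p.1 c < p.2 ∧ 0 < p.1} := ⟨h1, ht'⟩
      filter_upwards [hop.mem_nhds hmem] with p hp
      by_contra h
      push_neg at h
      have := (hmono hp.2.le).monotone h
      rw [hinv2 p.1 p.2] at this
      exact absurd (hp.1.trans_le this) (lt_irrefl _)
    · intro c hc
      have h1 : x' < φ t' c := by
        have := hmono ht'.le hc
        rwa [hinv2 t' x'] at this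
      have hop : IsOpen {p : ℝ × ℝ | p.2 < φ p.1 c ∧ 0 < p.1} := by
        refine IsOpen.inter ?_ (isOpen_lt continuous_const continuous_fst)
        exact isOpen_lt continuous_snd (hφcont.comp ((continuous_fst.prodMk continuous_const)))
      have hmem : (t', x') ∈ {p : ℝ × ℝ | p.2 < φ p.1 c ∧ 0 < p.1} := ⟨h1, ht'⟩
      filter_upwards [hop.mem_nhds hmem] with p hp
      by_contra h
      push_neg at h
      have := (hmono hp.2.le).monotone h
      rw [hinv2 p.1 p.2] at this
      exact absurd (this.trans_lt hp.1) (lt_irrefl _)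
  -- spatial derivative of ψ
  have hψd : ∀ {s : ℝ}, 0 ≤ s → ∀ w,
      HasDerivAt (ψ s) ((J s (ψ s w))⁻¹) w := by
    intro s hs w
    have hd : HasDerivAt (ψ s) (deriv (ψ s) w) w :=
      (((hψC1 s).differentiable one_ne_zero) w).hasDerivAt
    have hcomp : HasDerivAt (fun v => φ s (ψ s v)) (J s (ψ s w) * deriv (ψ s) w) w :=
      (hJd s (ψ s w)).comp w hd
    have hid : (fun v => φ s (ψ s v)) = fun v => v := funext (hinv2 s)
    rw [hid] at hcomp
    have h1 : J s (ψ s w) * deriv (ψ s) w = 1 := hcomp.unique (hasDerivAt_id w)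
    have hJne : J s (ψ s w) ≠ 0 := by
      rw [hJeq _ hs]; exact (Real.exp_pos _).ne'
    have h2 : deriv (ψ s) w = (J s (ψ s w))⁻¹ := by
      field_simp
      linarith [h1]
    rwa [h2] at hd
  -- joint continuity of the exponential Jacobian factor
  have hMcont : Continuous (fun p : ℝ × ℝ => ∫ r in (0:ℝ)..p.1, bx r (φ r p.2)) := by
    have huc : Continuous (Function.uncurry fun (p : ℝ × ℝ) (r : ℝ) => bx r (φ r p.2)) := by
      have h1 : Continuous fun q : (ℝ × ℝ) × ℝ => φ q.2 q.1.2 :=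
        hφcont.comp (continuous_snd.prodMk (continuous_fst.snd))
      exact hbxcont.comp (continuous_snd.prodMk h1)
    exact intervalIntegral.continuous_parametric_intervalIntegral_of_continuous huc continuous_fst
  -- the main statement
  intro t ht x
  have ht0 : 0 < t := ht.1
  set z : ℝ := ψ t x with hzdef
  have hz : φ t z = x := hinv2 t x
  set D : ℝ × ℝ → ℝ := fun p =>
    deriv u0 (ψ p.1 p.2) * (Real.exp (∫ r in (0:ℝ)..p.1, bx r (φ r (ψ p.1 p.2))))⁻¹ with hD
  -- D p is the spatial derivative of u0 ∘ ψ_{p.1} at p.2, for p.1 ≥ 0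
  have hud : ∀ {s : ℝ}, 0 ≤ s → ∀ w, HasDerivAt (fun v => u0 (ψ s v)) (D (s, w)) w := by
    intro s hs w
    have h1 : HasDerivAt u0 (deriv u0 (ψ s w)) (ψ s w) :=
      ((hu0.differentiable one_ne_zero) (ψ s w)).hasDerivAt
    have h2 := h1.comp w (hψd hs w)
    have h3 : (J s (ψ s w))⁻¹ = (Real.exp (∫ r in (0:ℝ)..s, bx r (φ r (ψ s w))))⁻¹ := by
      rw [hJeq _ hs]
    rw [h3] at h2
    exact h2
  have hψct : ContinuousAt (fun p : ℝ × ℝ => ψ p.1 p.2) (t, x) := by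
    have := hψcont t x ht0
    rwa [ContinuousAt]
  have hDcont : ContinuousAt D (t, x) := by
    have hu0' : Continuous (deriv u0) := hu0.continuous_deriv le_rfl
    have h1 : ContinuousAt (fun p : ℝ × ℝ => deriv u0 (ψ p.1 p.2)) (t, x) :=
      hu0'.continuousAt.comp hψct
    have h2 : ContinuousAt
        (fun p : ℝ × ℝ => (Real.exp (∫ r in (0:ℝ)..p.1, bx r (φ r (ψ p.1 p.2))))⁻¹) (t, x) := by
      have h3 : ContinuousAt (fun p : ℝ × ℝ => (p.1, ψ p.1 p.2)) (t, x) :=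
        continuous_fst.continuousAt.prodMk hψct
      have h4 : ContinuousAt
          (fun p : ℝ × ℝ => ∫ r in (0:ℝ)..p.1, bx r (φ r (ψ p.1 p.2))) (t, x) :=
        (hMcont.continuousAt).comp h3
      exact (Real.continuous_exp.continuousAt.comp h4).inv₀ (Real.exp_pos _).ne'
    exact h1.mul h2
  refine ⟨-(D (t, x) * (b t x + deriv X t)), D (t, x), ?_, hud ht0.le x, by ring⟩
  -- time derivative via the mean value theorem along characteristics
  set e : ℝ → ℝ := fun τ => φ τ z - x with he
  have hec : Continuous e := (hφt z).sub continuous_const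
  have het : e t = 0 := by rw [he]; simp [hz]
  have heD : HasDerivAt e (b t x + deriv X t) t := by
    have := (hflow' z t).sub_const x
    rwa [hz] at this
  have key : ∀ τ : ℝ, 0 < τ →
      ∃ c, |c - x| ≤ |e τ| ∧ u0 z - u0 (ψ τ x) = D (τ, c) * e τ := by
    intro τ hτ
    have hval : u0 (ψ τ (x + e τ)) = u0 z := by
      rw [he]
      simp only [add_sub_cancel]
      rw [hinv1 τ z]
    have hcψ : Continuous fun v => u0 (ψ τ v) := hu0.continuous.comp (hψC1 τ).continuous
    rcases lt_trichotomy (e τ) 0 with hlt | heq | hgt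
    · obtain ⟨c, hc, hc2⟩ := exists_hasDerivAt_eq_slope (fun v => u0 (ψ τ v))
        (fun v => D (τ, v)) (show x + e τ < x by linarith)
        hcψ.continuousOn (fun v _ => hud hτ.le v)
      refine ⟨c, ?_, ?_⟩
      · rw [abs_le, abs_of_neg hlt]
        constructor <;> linarith [hc.1, hc.2]
      · have h6 : x - (x + e τ) = -(e τ) := by ring
        rw [h6, hval] at hc2
        have h7 := (div_eq_iff (show -(e τ) ≠ 0 by linarith)).1 hc2.symm
        have h8 : D (τ, c) * -(e τ) = -(D (τ, c) * e τ) := by ring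
        rw [h8] at h7
        linarith
    · refine ⟨x, by simp [heq], ?_⟩
      have hzx : z = ψ τ x := by
        have h9 : x + e τ = φ τ z := by rw [he]; ring
        rw [heq, add_zero] at h9
        rw [h9, hinv1]
      rw [← hzx, heq, mul_zero, sub_self]
    · obtain ⟨c, hc, hc2⟩ := exists_hasDerivAt_eq_slope (fun v => u0 (ψ τ v))
        (fun v => D (τ, v)) (show x < x + e τ by linarith)
        hcψ.continuousOn (fun v _ => hud hτ.le v)
      refine ⟨c, ?_, ?_⟩
      · rw [abs_le, abs_of_pos hgt]
        constructor <;> linarith [hc.1, hc.2]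
      · have h6 : x + e τ - x = e τ := by ring
        rw [h6, hval] at hc2
        exact (div_eq_iff (ne_of_gt hgt)).1 hc2.symm
  classical
  set c : ℝ → ℝ := fun τ => if h : 0 < τ then (key τ h).choose else x with hc
  have hcspec : ∀ {τ : ℝ}, 0 < τ →
      |c τ - x| ≤ |e τ| ∧ u0 z - u0 (ψ τ x) = D (τ, c τ) * e τ := by
    intro τ hτ
    rw [hc]; simp only [dif_pos hτ]
    exact (key τ hτ).choose_spec
  have hct : Tendsto c (𝓝[≠] t) (𝓝 x) := by
    rw [tendsto_iff_dist_tendsto_zero]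
    have hle : ∀ᶠ τ in 𝓝[≠] t, dist (c τ) x ≤ |e τ| := by
      have hev : ∀ᶠ τ in 𝓝[≠] t, 0 < τ :=
        eventually_nhdsWithin_of_eventually_nhds (eventually_gt_nhds ht0)
      filter_upwards [hev] with τ hτ
      rw [Real.dist_eq]
      exact (hcspec hτ).1
    have he0 : Tendsto (fun τ => |e τ|) (𝓝[≠] t) (𝓝 0) := by
      have h1 := (hec.tendsto t).abs
      rw [het, abs_zero] at h1
      exact h1.mono_left nhdsWithin_le_nhds
    exact squeeze_zero' (Eventually.of_forall fun τ => dist_nonneg) hle he0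
  have hslopeφ : Tendsto (slope (fun τ => φ τ z) t) (𝓝[≠] t) (𝓝 (b t x + deriv X t)) := by
    have h1 := hasDerivAt_iff_tendsto_slope.1 (hflow' z t)
    rwa [hz] at h1
  have hDlim : Tendsto (fun τ => D (τ, c τ)) (𝓝[≠] t) (𝓝 (D (t, x))) := by
    have h1 : Tendsto (fun τ : ℝ => (τ, c τ)) (𝓝[≠] t) (𝓝 (t, x)) :=
      Tendsto.prodMk_nhds (tendsto_id.mono_right nhdsWithin_le_nhds) hct
    exact hDcont.tendsto.comp h1
  rw [hasDerivAt_iff_tendsto_slope]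
  have hfinal : Tendsto (fun τ => -(D (τ, c τ) * slope (fun σ => φ σ z) t τ))
      (𝓝[≠] t) (𝓝 (-(D (t, x) * (b t x + deriv X t)))) :=
    (hDlim.mul hslopeφ).neg
  refine hfinal.congr' ?_
  have hev : ∀ᶠ τ in 𝓝[≠] t, 0 < τ :=
    eventually_nhdsWithin_of_eventually_nhds (eventually_gt_nhds ht0)
  filter_upwards [hev, self_mem_nhdsWithin] with τ hτ0 hτt
  have hne : τ - t ≠ 0 := sub_ne_zero.2 hτt
  have h2 := (hcspec hτ0).2
  have h3 : u0 (ψ τ x) - u0 z = -(D (τ, c τ) * e τ) := by linarith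
  rw [slope_def_field, slope_def_field, hz, ← hzdef, h3]
  have h4 : e τ = φ τ z - x := rfl
  rw [← h4]
  field_simp
end
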